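/- For κ ∈ (0,4), setting γ = √κ, one has for all d ∈ [0,1]: Φ_κ(d) = 2·Ψ_γ((1/2)·Ψ_γ⁻¹(d)), where Ψ_γ(x) = (1+γ²/4)x − (γ²/4)x², Ψ_γ⁻¹(d) = (4 + γ² − √((4+γ²)² − 16γ²d))/(2γ²) is the inverse of Ψ_γ taking values in [0,1], and Φ_κ(d) = (1/(32κ))·(4 + κ − √((4+κ)² − 16κd))·(12 + 3κ + √((4+κ)² − 16κd)). -/
import Mathlib


noncomputable def Phi (κ d : ℝ) : ℝ :=
  (1 / (32 * κ)) * (4 + κ - Real.sqrt ((4 + κ)^2 - 16 * κ * d)) *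
    (12 + 3 * κ + Real.sqrt ((4 + κ)^2 - 16 * κ * d))

noncomputable def Psi (γ x : ℝ) : ℝ := (1 + γ^2/4) * x - (γ^2/4) * x^2

noncomputable def PsiInv (γ d : ℝ) : ℝ :=
  (4 + γ^2 - Real.sqrt ((4 + γ^2)^2 - 16 * γ^2 * d)) / (2 * γ^2)

theorem Phi_as_KPZ_composition (κ d : ℝ) (hκ0 : 0 < κ) (hκ4 : κ < 4)
    (hd0 : 0 ≤ d) (hd1 : d ≤ 1) :
    Phi κ d = 2 * Psi (Real.sqrt κ) ((1/2) * PsiInv (Real.sqrt κ) d) := by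
  have hsq : Real.sqrt κ ^ 2 = κ := Real.sq_sqrt hκ0.le
  have hrad : 0 ≤ (4 + κ)^2 - 16 * κ * d := by nlinarith
  set s := Real.sqrt ((4 + κ)^2 - 16 * κ * d) with hs
  have hs2 : s ^ 2 = (4 + κ)^2 - 16 * κ * d := Real.sq_sqrt hrad
  unfold Phi Psi PsiInv
  rw [hsq]
  field_simp
  nlinarith [hs2, sq_nonneg s, hκ0]
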